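/- Let p be a real number with p ≥ 3 and let i, ℓ be positive integers with p^i ≤ ℓ < p^{i+1}. Let k₁, k₂ be positive real numbers and suppose f₀, f₁, …, f_i are real numbers satisfying k₁/p^j − k₂/ℓ ≤ f_j ≤ k₁/p^j + k₂/ℓ for every j ∈ {0,…,i}. Then for any integer n with n ≥ 9 and any real numbers q, t with q ≥ 2 and t ≥ 1, (1 − 1/p^{t+i} − 3/q^{n/4})·f_i + Σ_{j=0}^{i−1} (1 − 1/p^{t+j} − 3/q^{n/4})·(f_j − f_{j+1}) > (1 − 1/(p^{t−1}(p+1)))·k₁ − (k₂ + k₁/p^t)/ℓ − 3k₁/q^{n/4}. -/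

import Mathlib

open Finset

private lemma abel_identity (W g : ℕ → ℝ) (i : ℕ) :
    W i * g i + ∑ j ∈ range i, W j * (g j - g (j + 1)) =
      W 0 * g 0 + ∑ j ∈ range i, (W (j + 1) - W j) * g (j + 1) := by
  induction i with
  | zero => simp
  | succ n ih =>
      rw [Finset.sum_range_succ, Finset.sum_range_succ]
      linear_combination ih

private lemma final_ineq (c r A k₁ k₂ L X : ℝ)
    (hc : 0 < c) (hr0 : 0 < r) (hr1 : r < 1) (hA : 0 < A)
    (hk1 : 0 < k₁) (hk2 : 0 < k₂) (hL : 0 < L) (hX0 : 0 < X) (hX1 : X ≤ 1)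
    (hkey : L * (r * X ^ 2) ≤ X) :
    (1 - c - A) * (k₁ - k₂ / L)
        + (c * (1 - r) * (k₁ * r)) * ((X ^ 2 - 1) / (r ^ 2 - 1))
        - (c * (1 - r) * (k₂ / L)) * ((X - 1) / (r - 1))
      > (1 - c / (1 + r)) * k₁ - (k₂ + c * k₁) / L - A * k₁ := by
  have h1r : (0:ℝ) < 1 + r := by linarith
  have hne1 : r - 1 ≠ 0 := by intro h; linarith [sub_eq_zero.mp h]
  have hne2 : (1:ℝ) + r ≠ 0 := by positivity
  have hne3 : r ^ 2 - 1 ≠ 0 := by nlinarith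
  have hLne : L ≠ 0 := ne_of_gt hL
  have hkey2 : L * (r * X ^ 2) < 1 + r := lt_of_le_of_lt (hkey.trans hX1) (by linarith)
  rw [gt_iff_lt, ← sub_pos]
  have hnum : 0 < c * k₁ * ((1 + r) - L * (r * X ^ 2)) + k₂ * (A + c * X) * (1 + r) := by
    have t1 := mul_pos (mul_pos hc hk1) (sub_pos.mpr hkey2)
    have t2 : 0 < k₂ * (A + c * X) * (1 + r) := by positivity
    linarith
  have h := div_pos hnum (mul_pos hL h1r)
  convert h using 1
  · rfl
  field_simp
  ring

theorem weighted_sum_lower_bound (p q t k₁ k₂ : ℝ) (i ℓ n : ℕ)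
    (hp : 3 ≤ p) (hq : 2 ≤ q) (ht : 1 ≤ t) (hn : 9 ≤ n) (hi : 0 < i) (hℓ : 0 < ℓ)
    (hℓ1 : p ^ i ≤ (ℓ : ℝ)) (hℓ2 : (ℓ : ℝ) < p ^ (i + 1))
    (hk₁ : 0 < k₁) (hk₂ : 0 < k₂)
    (f : ℕ → ℝ)
    (hf : ∀ j ≤ i, k₁ / p ^ j - k₂ / ℓ ≤ f j ∧ f j ≤ k₁ / p ^ j + k₂ / ℓ) :
    (1 - 1 / p ^ (t + (i : ℝ)) - 3 / q ^ ((n : ℝ) / 4)) * f i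
        + ∑ j ∈ Finset.range i,
            (1 - 1 / p ^ (t + (j : ℝ)) - 3 / q ^ ((n : ℝ) / 4)) * (f j - f (j + 1))
      > (1 - 1 / (p ^ (t - 1) * (p + 1))) * k₁ - (k₂ + k₁ / p ^ t) / ℓ
          - 3 * k₁ / q ^ ((n : ℝ) / 4) := by
  have hp0 : (0:ℝ) < p := by linarith
  have hp1 : (1:ℝ) < p := by linarith
  have hq0 : (0:ℝ) < q := by linarith
  have hL0 : (0:ℝ) < (ℓ:ℝ) := by exact_mod_cast hℓ
  have hpt : (0:ℝ) < p ^ t := Real.rpow_pos_of_pos hp0 t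
  have hqn : (0:ℝ) < q ^ ((n:ℝ) / 4) := Real.rpow_pos_of_pos hq0 _
  set c : ℝ := 1 / p ^ t with hc_def
  set r : ℝ := 1 / p with hr_def
  set A : ℝ := 3 / q ^ ((n:ℝ) / 4) with hA_def
  have hc0 : 0 < c := by positivity
  have hr0 : 0 < r := by positivity
  have hr1 : r < 1 := by rw [hr_def, div_lt_one hp0]; linarith
  have hcr : c ≤ r := by
    have h1 : p ^ (1:ℝ) ≤ p ^ t := Real.rpow_le_rpow_of_exponent_le hp1.le ht
    rw [Real.rpow_one] at h1
    rw [hc_def, hr_def]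
    exact one_div_le_one_div_of_le hp0 h1
  have hr3 : r ≤ 1/3 := by
    rw [hr_def, div_le_div_iff₀ hp0 (by norm_num : (0:ℝ) < 3)]; linarith
  have hA0 : 0 < A := by positivity
  have hA23 : A < 2/3 := by
    have h2 : (2:ℝ) ^ ((9:ℝ)/4) ≤ q ^ ((9:ℝ)/4) :=
      Real.rpow_le_rpow (by norm_num) hq (by norm_num)
    have h3 : q ^ ((9:ℝ)/4) ≤ q ^ ((n:ℝ)/4) := by
      apply Real.rpow_le_rpow_of_exponent_le (by linarith)
      have h9 : (9:ℝ) ≤ (n:ℝ) := by exact_mod_cast hn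
      linarith
    have h5 : ((2:ℝ) ^ ((9:ℝ)/4)) ^ (4:ℕ) = 512 := by
      rw [← Real.rpow_natCast ((2:ℝ) ^ ((9:ℝ)/4)) 4, ← Real.rpow_mul (by norm_num)]
      norm_num
    have h4 : (4.5:ℝ) < (2:ℝ) ^ ((9:ℝ)/4) := by
      apply lt_of_pow_lt_pow_left₀ 4 (by positivity)
      rw [h5]; norm_num
    have h6 : A < 3 / 4.5 := by
      rw [hA_def]
      apply div_lt_div_of_pos_left (by norm_num) (by norm_num)
      linarith
    linarith
  -- rewrite rpow weights
  have hpow : ∀ j : ℕ, (1:ℝ) / p ^ (t + (j:ℝ)) = c * r ^ j := by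
    intro j
    rw [Real.rpow_add hp0, Real.rpow_natCast, hc_def, hr_def, one_div_pow,
      div_mul_div_comm, one_mul]
  simp only [hpow]
  have habel : (1 - c * r ^ i - A) * f i
        + ∑ j ∈ range i, (1 - c * r ^ j - A) * (f j - f (j + 1))
      = (1 - c * r ^ 0 - A) * f 0
        + ∑ j ∈ range i, ((1 - c * r ^ (j+1) - A) - (1 - c * r ^ j - A)) * f (j + 1) :=
    abel_identity (fun j => 1 - c * r ^ j - A) f i
  rw [habel]
  -- lower bound for the Abel form
  have hW0 : 0 ≤ 1 - c * r ^ 0 - A := by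
    rw [pow_zero, mul_one]; linarith
  have hstep : (1 - c * r ^ 0 - A) * (k₁ - k₂ / ℓ)
        + ∑ j ∈ range i, (c * r ^ j * (1 - r)) * (k₁ * r ^ (j+1) - k₂ / ℓ)
      ≤ (1 - c * r ^ 0 - A) * f 0
        + ∑ j ∈ range i, ((1 - c * r ^ (j+1) - A) - (1 - c * r ^ j - A)) * f (j + 1) := by
    apply add_le_add
    · apply mul_le_mul_of_nonneg_left _ hW0
      have := (hf 0 (Nat.zero_le i)).1
      simpa using this
    · apply Finset.sum_le_sum
      intro j hj
      have hWd : (1 - c * r ^ (j+1) - A) - (1 - c * r ^ j - A) = c * r ^ j * (1 - r) := by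
        ring
      rw [hWd]
      apply mul_le_mul_of_nonneg_left _ (by
        have h1r : (0:ℝ) ≤ 1 - r := by linarith
        positivity)
      have hje : j + 1 ≤ i := Finset.mem_range.mp hj
      have := (hf (j+1) hje).1
      have heq : k₁ * r ^ (j+1) = k₁ / p ^ (j+1) := by
        rw [hr_def, one_div_pow, mul_one_div]
      linarith [heq ▸ this]
  -- closed form for the sum
  have hrne : r ≠ 1 := ne_of_lt hr1
  have hr2ne : r ^ 2 ≠ 1 := by nlinarith
  have hsum : ∑ j ∈ range i, (c * r ^ j * (1 - r)) * (k₁ * r ^ (j+1) - k₂ / ℓ)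
      = (c * (1 - r) * (k₁ * r)) * (((r ^ i) ^ 2 - 1) / (r ^ 2 - 1))
        - (c * (1 - r) * (k₂ / ℓ)) * ((r ^ i - 1) / (r - 1)) := by
    have h1 : ∀ j ∈ range i, (c * r ^ j * (1 - r)) * (k₁ * r ^ (j+1) - k₂ / ℓ)
        = (c * (1 - r) * (k₁ * r)) * (r ^ 2) ^ j - (c * (1 - r) * (k₂ / ℓ)) * r ^ j := by
      intro j _
      ring
    rw [Finset.sum_congr rfl h1, Finset.sum_sub_distrib, ← Finset.mul_sum, ← Finset.mul_sum,
      geom_sum_eq hr2ne, geom_sum_eq hrne, ← pow_mul, mul_comm 2 i, pow_mul]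
  -- key inequality hypothesis
  have hXkey : (ℓ:ℝ) * (r * (r ^ i) ^ 2) ≤ r ^ i := by
    have h1 : (ℓ:ℝ) * r ^ (i+1) ≤ 1 := by
      have hppos : (0:ℝ) < p ^ (i+1) := pow_pos hp0 _
      rw [hr_def, one_div_pow, mul_one_div, div_le_one hppos]
      linarith
    calc (ℓ:ℝ) * (r * (r ^ i) ^ 2) = ((ℓ:ℝ) * r ^ (i+1)) * r ^ i := by ring
      _ ≤ 1 * r ^ i := by
          apply mul_le_mul_of_nonneg_right h1 (pow_nonneg hr0.le i)
      _ = r ^ i := one_mul _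
  have hfin := final_ineq c r A k₁ k₂ (ℓ:ℝ) (r ^ i) hc0 hr0 hr1 hA0 hk₁ hk₂ hL0
    (pow_pos hr0 i) (pow_le_one₀ hr0.le hr1.le) hXkey
  -- rewrite target RHS
  have hRHS : (1 - 1 / (p ^ (t - 1) * (p + 1))) * k₁ - (k₂ + k₁ / p ^ t) / ℓ
        - 3 * k₁ / q ^ ((n:ℝ) / 4)
      = (1 - c / (1 + r)) * k₁ - (k₂ + c * k₁) / ℓ - A * k₁ := by
    rw [Real.rpow_sub hp0, Real.rpow_one, hc_def, hr_def, hA_def]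
    have hptne : p ^ t ≠ 0 := ne_of_gt hpt
    have hpne : p ≠ 0 := ne_of_gt hp0
    have hp1ne : p + 1 ≠ 0 := by positivity
    have hqne : q ^ ((n:ℝ)/4) ≠ 0 := ne_of_gt hqn
    have hLne : (ℓ:ℝ) ≠ 0 := ne_of_gt hL0
    field_simp
  rw [hRHS]
  calc (1 - c / (1 + r)) * k₁ - (k₂ + c * k₁) / ℓ - A * k₁
      < (1 - c - A) * (k₁ - k₂ / ℓ)
        + (c * (1 - r) * (k₁ * r)) * (((r ^ i) ^ 2 - 1) / (r ^ 2 - 1))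
        - (c * (1 - r) * (k₂ / ℓ)) * ((r ^ i - 1) / (r - 1)) := hfin
    _ = (1 - c * r ^ 0 - A) * (k₁ - k₂ / ℓ)
        + ∑ j ∈ range i, (c * r ^ j * (1 - r)) * (k₁ * r ^ (j+1) - k₂ / ℓ) := by
          rw [hsum, pow_zero, mul_one]; ring
    _ ≤ _ := hstep
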